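/- Let 𝐁 = {z = (z_j)_{j≥1} ∈ 𝔻^ℕ : z_j → 0} and let φ = (φ_j)_{j≥1} : 𝐁 → 𝐁 be an analytic map such that C_φ maps A⁺(𝕋^∞) into itself. Suppose C_φ is an automorphism of A⁺(𝕋^∞) (a bijection of A⁺(𝕋^∞) onto itself), and suppose moreover that for each k ∈ ℕ there are an integer d_k ≥ 1 and an analytic function u_k on 𝐁 with u_k(0) ≠ 0 such that φ_k(z) = z_k^{d_k} u_k(z) for all z ∈ 𝐁. Then there is a sequence (ε_j)_{j≥1} of complex numbers of modulus 1 such that φ(z) = (ε_j z_j)_{j≥1} for all z ∈ 𝐁. -/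

import Mathlib

open Complex Filter
open scoped ENNReal

noncomputable section

/-- The Banach space `ℓ¹` over finitely supported multi-indices, modelling the Wiener
algebra `A⁺(𝕋^∞)` of absolutely convergent Taylor series in countably many variables. -/
abbrev CoeffInf := lp (fun _ : ℕ →₀ ℕ => ℂ) 1

/-- The open unit ball `𝐁 = 𝔻^∞ ∩ c₀` of the space `c₀`: sequences of modulus `< 1`
tending to `0`. -/
def ballB : Set (ℕ → ℂ) :=
  {z | (∀ j, ‖z j‖ < 1) ∧ Tendsto (fun j => z j) atTop (nhds 0)}

/-- The monomial `z^α` for a finitely supported multi-index `α`. -/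
def monomial (z : ℕ → ℂ) (α : ℕ →₀ ℕ) : ℂ := α.prod fun j m => z j ^ m

namespace Stmt11

open Metric Set FormalMultilinearSeries

/-! ### One variable power series with absolutely summable coefficients -/

/-- Sum of a power series in one variable. -/
def psum (c : ℕ → ℂ) (w : ℂ) : ℂ := ∑' n, c n * w ^ n

lemma ofScalars_coeff (c : ℕ → ℂ) (n : ℕ) : (ofScalars ℂ c).coeff n = c n := by
  show (ofScalars ℂ c) n 1 = c n
  have := ofScalars_apply_eq (c := c) (1 : ℂ) n
  simpa [Pi.one_def] using this

lemma summable_term {c : ℕ → ℂ} (hc : Summable fun n => ‖c n‖) {w : ℂ} (hw : ‖w‖ ≤ 1) :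
    Summable fun n => c n * w ^ n := by
  refine Summable.of_norm (hc.of_nonneg_of_le (fun n => norm_nonneg _) fun n => ?_)
  rw [norm_mul, norm_pow]
  calc ‖c n‖ * ‖w‖ ^ n ≤ ‖c n‖ * 1 := by
        gcongr
        exact pow_le_one₀ (norm_nonneg _) hw
    _ = ‖c n‖ := mul_one _

lemma psum_zero (c : ℕ → ℂ) : psum c 0 = c 0 := by
  rw [psum, tsum_eq_single 0]
  · simp
  · intro n hn
    simp [zero_pow hn]

lemma hasFPB {c : ℕ → ℂ} (hc : Summable fun n => ‖c n‖) :
    HasFPowerSeriesOnBall (psum c) (ofScalars ℂ c) 0 1 := by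
  constructor
  · apply FormalMultilinearSeries.le_radius_of_summable_norm
    refine hc.congr fun n => ?_
    simp [ofScalars_norm, ofScalars_coeff]
  · exact one_pos
  · intro y hy
    rw [mem_emetric_ball_zero_iff] at hy
    have hy' : ‖y‖ ≤ 1 := by
      rw [← ENNReal.coe_one, enorm_eq_nnnorm, ENNReal.coe_lt_coe] at hy
      exact_mod_cast hy.le
    have := (summable_term hc hy').hasSum
    rw [zero_add]
    convert this using 2 with n
    · rfl
    · rw [ofScalars_apply_eq]
      simp [smul_eq_mul]
    · rfl

lemma psum_analytic {c : ℕ → ℂ} (hc : Summable fun n => ‖c n‖) :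
    AnalyticOnNhd ℂ (psum c) (ball (0 : ℂ) 1) := by
  have h := (hasFPB hc).analyticOnNhd
  intro w hw
  apply h
  rw [mem_ball, dist_zero_right] at hw
  rw [mem_emetric_ball_zero_iff, ← ENNReal.coe_one, enorm_eq_nnnorm, ENNReal.coe_lt_coe]
  exact_mod_cast hw

lemma psum_unique {c c' : ℕ → ℂ} (hc : Summable fun n => ‖c n‖)
    (hc' : Summable fun n => ‖c' n‖)
    (h : ∀ w ∈ ball (0 : ℂ) 1, psum c w = psum c' w) : c = c' := by
  have h1 : HasFPowerSeriesAt (psum c) (ofScalars ℂ c) 0 := (hasFPB hc).hasFPowerSeriesAt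
  have h2 : HasFPowerSeriesAt (psum c) (ofScalars ℂ c') 0 := by
    refine ((hasFPB hc').hasFPowerSeriesAt).congr ?_
    filter_upwards [ball_mem_nhds (0 : ℂ) one_pos] with w hw
    exact (h w hw).symm
  have := h1.eq_formalMultilinearSeries h2
  exact (ofScalars_series_eq_iff ℂ c c').mp this

lemma psum_single (ε : ℂ) (w : ℂ) :
    psum (fun n => if n = 1 then ε else 0) w = ε * w := by
  rw [psum, tsum_eq_single 1]
  · simp
  · intro n hn
    simp [hn]

lemma summable_single (ε : ℂ) :
    Summable fun n => ‖if n = 1 then ε else (0 : ℂ)‖ := by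
  apply summable_of_ne_finset_zero (s := {1})
  intro n hn
  simp only [Finset.mem_singleton] at hn
  simp [hn]

lemma norm_psum_le {c : ℕ → ℂ} (hc : Summable fun n => ‖c n‖) {w : ℂ} (hw : ‖w‖ ≤ 1) :
    ‖psum c w‖ ≤ ∑' n, ‖c n‖ := by
  have hs : Summable fun n => ‖c n * w ^ n‖ :=
    hc.of_nonneg_of_le (fun n => norm_nonneg _) fun n => by
      rw [norm_mul, norm_pow]
      calc ‖c n‖ * ‖w‖ ^ n ≤ ‖c n‖ * 1 := by
            gcongr; exact pow_le_one₀ (norm_nonneg _) hw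
        _ = ‖c n‖ := mul_one _
  refine (norm_tsum_le_tsum_norm hs).trans ?_
  refine Summable.tsum_le_tsum (fun n => ?_) hs hc
  rw [norm_mul, norm_pow]
  calc ‖c n‖ * ‖w‖ ^ n ≤ ‖c n‖ * 1 := by
        gcongr; exact pow_le_one₀ (norm_nonneg _) hw
    _ = ‖c n‖ := mul_one _

/-- Schwarz lemma, `≤ 1` version. -/
lemma schwarz {h : ℂ → ℂ} (hd : DifferentiableOn ℂ h (ball 0 1)) (h0 : h 0 = 0)
    (hle : ∀ w ∈ ball (0 : ℂ) 1, ‖h w‖ ≤ 1) {w : ℂ} (hw : w ∈ ball (0 : ℂ) 1) :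
    ‖h w‖ ≤ ‖w‖ := by
  have key : ∀ R : ℝ, 1 < R → ‖h w‖ ≤ R * ‖w‖ := by
    intro R hR
    have hmaps : MapsTo h (ball 0 1) (ball (h 0) R) := by
      intro x hx
      rw [h0, mem_ball, dist_zero_right]
      exact lt_of_le_of_lt (hle x hx) hR
    have := Complex.dist_le_div_mul_dist_of_mapsTo_ball hd (hmaps.mono_right ball_subset_closedBall) hw
    simpa [h0, dist_zero_right, div_one] using this
  rcases eq_or_ne w 0 with rfl | hw0
  · simp [h0]
  have hnw : 0 < ‖w‖ := norm_pos_iff.mpr hw0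
  by_contra hcon
  push_neg at hcon
  have hR : 1 < (‖h w‖ + ‖w‖) / (2 * ‖w‖) := by
    rw [lt_div_iff₀ (by positivity)]
    linarith
  have hk := key _ hR
  rw [div_mul_eq_mul_div] at hk
  rw [le_div_iff₀ (by positivity : (0:ℝ) < 2 * ‖w‖)] at hk
  nlinarith

lemma rigid_core {c : ℕ → ℂ} (hc : Summable fun n => ‖c n‖)
    (hlt : ∀ w ∈ ball (0 : ℂ) 1, ‖psum c w‖ < 1)
    (h0 : psum c 0 = 0)
    {w₀ : ℂ} (hw₀ : w₀ ∈ ball (0 : ℂ) 1) (hmax : 1 ≤ ‖dslope (psum c) 0 w₀‖) :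
    ‖c 1‖ = 1 ∧ ∀ n, n ≠ 1 → c n = 0 := by
  set h := psum c with hh
  have hana : AnalyticOnNhd ℂ h (ball 0 1) := psum_analytic hc
  have hd : DifferentiableOn ℂ h (ball 0 1) :=
    fun x hx => (hana x hx).differentiableAt.differentiableWithinAt
  have hmaps : MapsTo h (ball 0 1) (ball (h 0) 1) := by
    intro x hx
    rw [h0, mem_ball, dist_zero_right]
    exact hlt x hx
  set g := dslope h 0 with hg
  have hgd : DifferentiableOn ℂ g (ball 0 1) :=
    (differentiableOn_dslope (isOpen_ball.mem_nhds (mem_ball_self one_pos))).mpr hd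
  have hgle : ∀ x ∈ ball (0 : ℂ) 1, ‖g x‖ ≤ 1 := fun x hx => by
    simpa using Complex.norm_dslope_le_div_of_mapsTo_ball hd (hmaps.mono_right ball_subset_closedBall) hx
  have hmax' : IsMaxOn (norm ∘ g) (ball 0 1) w₀ := by
    intro x hx
    exact (hgle x hx).trans hmax
  have heq := Complex.eqOn_of_isPreconnected_of_isMaxOn_norm
    (convex_ball (0 : ℂ) 1).isPreconnected isOpen_ball hgd hw₀ hmax'
  set ε := g w₀ with hεdef
  have hε : ‖ε‖ = 1 := le_antisymm (hgle w₀ hw₀) hmax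
  have hval : ∀ w ∈ ball (0 : ℂ) 1, h w = ε * w := by
    intro w hw
    rcases eq_or_ne w 0 with rfl | hw0
    · rw [h0, mul_zero]
    · have h1 : g w = ε := heq hw
      rw [hg, dslope_of_ne _ hw0, slope_def_field, h0, sub_zero, sub_zero] at h1
      field_simp at h1
      rw [h1, mul_comm]
  have hcc : c = fun n => if n = 1 then ε else 0 := by
    apply psum_unique hc (summable_single ε)
    intro w hw
    rw [psum_single]
    exact hval w hw
  constructor
  · rw [hcc]
    simpa using hε
  · intro n hn
    rw [hcc]
    simp [hn]

/-! ### Grouping of a multi-indexed series into a one-variable series -/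

lemma group {I : Type*} (u : I → ℂ) (hu : Summable fun i => ‖u i‖) (g : I → ℕ) :
    (Summable fun n => ‖∑' i : g ⁻¹' {n}, u i‖) ∧
      ∀ w : ℂ, ‖w‖ ≤ 1 →
        ∑' i, u i * w ^ g i = psum (fun n => ∑' i : g ⁻¹' {n}, u i) w := by
  have hfib : HasSum (fun n => ∑' i : g ⁻¹' {n}, ‖u i‖) (∑' i, ‖u i‖) :=
    hu.hasSum.tsum_fiberwise g
  constructor
  · refine hfib.summable.of_nonneg_of_le (fun n => norm_nonneg _) fun n => ?_
    exact norm_tsum_le_tsum_norm (hu.subtype _)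
  · intro w hw
    have ht : Summable fun i => u i * w ^ g i := by
      refine Summable.of_norm (hu.of_nonneg_of_le (fun i => norm_nonneg _) fun i => ?_)
      rw [norm_mul, norm_pow]
      calc ‖u i‖ * ‖w‖ ^ g i ≤ ‖u i‖ * 1 := by
            gcongr; exact pow_le_one₀ (norm_nonneg _) hw
        _ = ‖u i‖ := mul_one _
    have h2 := ht.hasSum.tsum_fiberwise g
    have h3 : (fun n => ∑' i : g ⁻¹' {n}, (u ↑i * w ^ g ↑i)) =
        fun n => (∑' i : g ⁻¹' {n}, u ↑i) * w ^ n := by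
      funext n
      rw [← tsum_mul_right]
      exact tsum_congr fun i => by rw [show g ↑i = n from i.2]
    rw [h3] at h2
    exact h2.tsum_eq.symm


/-! ### Multi-indices -/

/-- Total degree of a multi-index. -/
def deg (α : ℕ →₀ ℕ) : ℕ := α.sum fun _ n => n

lemma deg_single (k n : ℕ) : deg (Finsupp.single k n) = n := by
  simp [deg, Finsupp.sum_single_index]

lemma le_deg (α : ℕ →₀ ℕ) (j : ℕ) : α j ≤ deg α := by
  rcases eq_or_ne (α j) 0 with h | h
  · simp [h]
  · exact Finset.single_le_sum (f := fun i => α i) (fun i _ => Nat.zero_le _)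
      (Finsupp.mem_support_iff.2 h)

lemma deg_eq_zero {α : ℕ →₀ ℕ} (h : deg α = 0) : α = 0 := by
  ext j
  have := le_deg α j
  simp only [Finsupp.coe_zero, Pi.zero_apply]
  omega

lemma deg_eq_one {α : ℕ →₀ ℕ} (h : deg α = 1) : ∃ j, α = Finsupp.single j 1 := by
  have hne : α.support.Nonempty := by
    rw [Finsupp.support_nonempty_iff]
    intro h0
    rw [h0] at h
    simp [deg] at h
  obtain ⟨j, hj⟩ := hne
  have hαj : α j = 1 := by
    have h1 : 1 ≤ α j := Nat.one_le_iff_ne_zero.2 (Finsupp.mem_support_iff.1 hj)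
    have h2 := le_deg α j
    omega
  refine ⟨j, ?_⟩
  ext i
  rcases eq_or_ne i j with rfl | hij
  · simp [hαj]
  · rw [Finsupp.single_eq_of_ne' (Ne.symm hij)]
    by_contra hi
    have hi' : i ∈ α.support := Finsupp.mem_support_iff.2 hi
    have hsub : ({i, j} : Finset ℕ) ⊆ α.support := by
      intro x hx
      rcases Finset.mem_insert.1 hx with rfl | hx
      · exact hi'
      · rw [Finset.mem_singleton.1 hx]; exact hj
    have hsum : α i + α j ≤ deg α := by
      rw [deg, Finsupp.sum]
      calc α i + α j = ∑ x ∈ ({i, j} : Finset ℕ), α x := by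
            rw [Finset.sum_pair hij]
        _ ≤ ∑ x ∈ α.support, α x := Finset.sum_le_sum_of_subset hsub
    have : 1 ≤ α i := Nat.one_le_iff_ne_zero.2 hi
    omega

lemma deg_erase_add (k : ℕ) (α : ℕ →₀ ℕ) :
    deg α = α k + ∑ j ∈ α.support.erase k, α j := by
  rw [deg, Finsupp.sum]
  by_cases hk : k ∈ α.support
  · exact (Finset.add_sum_erase _ (fun i => α i) hk).symm
  · rw [Finset.erase_eq_of_notMem hk, Finsupp.notMem_support_iff.1 hk, zero_add]

lemma eq_single_of_support_subset {α : ℕ →₀ ℕ} {k : ℕ} (h : α.support ⊆ {k}) :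
    α = Finsupp.single k (α k) := by
  ext i
  rcases eq_or_ne i k with rfl | hik
  · simp
  · rw [Finsupp.single_eq_of_ne' (Ne.symm hik)]
    by_contra hi
    exact hik (Finset.mem_singleton.1 (h (Finsupp.mem_support_iff.2 hi)))

/-! ### Monomials -/

lemma monomial_single (z : ℕ → ℂ) (k m : ℕ) :
    monomial z (Finsupp.single k m) = z k ^ m := by
  rw [monomial]
  exact Finsupp.prod_single_index (pow_zero _)

lemma norm_monomial_le {z : ℕ → ℂ} (hz : ∀ j, ‖z j‖ ≤ 1) (α : ℕ →₀ ℕ) :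
    ‖monomial z α‖ ≤ 1 := by
  rw [monomial, Finsupp.prod, norm_prod]
  refine Finset.prod_le_one (fun j _ => norm_nonneg _) fun j _ => ?_
  rw [norm_pow]
  exact pow_le_one₀ (norm_nonneg _) (hz j)

lemma monomial_eq_zero {z : ℕ → ℂ} {α : ℕ →₀ ℕ} {j : ℕ} (hz : z j = 0) (hα : α j ≠ 0) :
    monomial z α = 0 := by
  rw [monomial, Finsupp.prod]
  exact Finset.prod_eq_zero (Finsupp.mem_support_iff.2 hα) (by rw [hz, zero_pow hα])

/-- The `q`-part of the monomial along the curve `z j = q j * w`. -/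
def Qf (q : ℕ → ℂ) (α : ℕ →₀ ℕ) : ℂ := ∏ j ∈ α.support, q j ^ α j

lemma norm_Qf_le {q : ℕ → ℂ} (hq : ∀ j, ‖q j‖ ≤ 1) (α : ℕ →₀ ℕ) : ‖Qf q α‖ ≤ 1 := by
  rw [Qf, norm_prod]
  refine Finset.prod_le_one (fun j _ => norm_nonneg _) fun j _ => ?_
  rw [norm_pow]
  exact pow_le_one₀ (norm_nonneg _) (hq j)

lemma monomial_curve (q : ℕ → ℂ) (w : ℂ) (α : ℕ →₀ ℕ) :
    monomial (fun j => q j * w) α = Qf q α * w ^ deg α := by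
  rw [monomial, Finsupp.prod, Qf, deg, Finsupp.sum, ← Finset.prod_pow_eq_pow_sum,
    ← Finset.prod_mul_distrib]
  exact Finset.prod_congr rfl fun j _ => mul_pow _ _ _

lemma Qf_single (q : ℕ → ℂ) (k m : ℕ) : Qf q (Finsupp.single k m) = q k ^ m := by
  rcases eq_or_ne m 0 with rfl | hm
  · simp [Qf]
  · rw [Qf, Finsupp.support_single_ne_zero _ hm, Finset.prod_singleton,
      Finsupp.single_eq_same]

lemma Qf_eq_zero {q : ℕ → ℂ} {α : ℕ →₀ ℕ} {j : ℕ} (hj : j ∈ α.support) (h : q j = 0) :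
    Qf q α = 0 :=
  Finset.prod_eq_zero hj (by rw [h, zero_pow (Finsupp.mem_support_iff.1 hj)])

lemma Qf_pow {q : ℕ → ℂ} {α : ℕ →₀ ℕ} {v : ℂ} {k : ℕ} {s : ℕ → ℕ} (hk : q k = 1)
    (hother : ∀ j ∈ α.support.erase k, q j = v ^ s j) :
    Qf q α = v ^ ∑ j ∈ α.support.erase k, s j * α j := by
  have hprod : ∏ j ∈ α.support.erase k, q j ^ α j
      = v ^ ∑ j ∈ α.support.erase k, s j * α j := by
    rw [← Finset.prod_pow_eq_pow_sum]
    refine Finset.prod_congr rfl fun j hj => ?_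
    rw [hother j hj, ← pow_mul]
  by_cases hks : k ∈ α.support
  · rw [Qf, ← Finset.mul_prod_erase _ _ hks, hk, one_pow, one_mul, hprod]
  · rw [Qf, ← hprod]
    exact Finset.prod_congr (Finset.erase_eq_of_notMem hks).symm fun _ _ => rfl

/-! ### Base-`B` digit uniqueness -/

lemma sum_lt_pow {B : ℕ} (hB : 2 ≤ B) (e : ℕ → ℕ) (s : Finset ℕ) (M : ℕ)
    (hs : ∀ j ∈ s, j < M) (he : ∀ j ∈ s, e j < B) :
    ∑ j ∈ s, B ^ j * e j < B ^ M := by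
  induction M generalizing s with
  | zero =>
    have : s = ∅ := Finset.eq_empty_of_forall_notMem fun j hj => by
      have := hs j hj; omega
    simp [this]
  | succ M ih =>
    by_cases hM : M ∈ s
    · have hsplit : ∑ j ∈ s, B ^ j * e j
          = B ^ M * e M + ∑ j ∈ s.erase M, B ^ j * e j :=
        (Finset.add_sum_erase _ _ hM).symm
      have h1 : ∑ j ∈ s.erase M, B ^ j * e j < B ^ M := by
        refine ih _ (fun j hj => ?_) (fun j hj => he j (Finset.mem_of_mem_erase hj))
        have h2 := hs j (Finset.mem_of_mem_erase hj)
        have h3 := Finset.ne_of_mem_erase hj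
        omega
      have h4 : e M ≤ B - 1 := by have := he M hM; omega
      have h5 : B ^ M * e M ≤ B ^ M * (B - 1) := Nat.mul_le_mul_left _ h4
      have h6 : B ^ M * (B - 1) + B ^ M = B ^ (M + 1) := by
        rw [Nat.mul_sub, Nat.mul_one, pow_succ]
        have : B ^ M ≤ B ^ M * B := Nat.le_mul_of_pos_right _ (by omega)
        rw [mul_comm (B ^ M) B] at this ⊢
        omega
      omega
    · have h1 : ∑ j ∈ s, B ^ j * e j < B ^ M := by
        refine ih _ (fun j hj => ?_) he
        have h2 := hs j hj
        rcases eq_or_ne j M with rfl | hjM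
        · exact absurd hj hM
        · omega
      have : B ^ M ≤ B ^ (M + 1) := Nat.pow_le_pow_right (by omega) (Nat.le_succ _)
      omega

lemma digit_cancel {x p q ea fa : ℕ} (hx : p < x) (hq : q < x)
    (h : x * ea + p = x * fa + q) : ea = fa ∧ p = q := by
  have hea : ea = fa := by
    rcases lt_trichotomy ea fa with h1 | h1 | h1
    · exfalso
      have : x * ea + x ≤ x * fa := by
        calc x * ea + x = x * (ea + 1) := by ring
          _ ≤ x * fa := Nat.mul_le_mul_left _ (by omega)
      omega
    · exact h1
    · exfalso
      have : x * fa + x ≤ x * ea := by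
        calc x * fa + x = x * (fa + 1) := by ring
          _ ≤ x * ea := Nat.mul_le_mul_left _ (by omega)
      omega
  subst hea
  omega

lemma digits_inj {B : ℕ} (hB : 2 ≤ B) (e f : ℕ → ℕ) (s : Finset ℕ)
    (he : ∀ j ∈ s, e j < B) (hf : ∀ j ∈ s, f j < B)
    (hsum : ∑ j ∈ s, B ^ j * e j = ∑ j ∈ s, B ^ j * f j) : ∀ j ∈ s, e j = f j := by
  induction s using Finset.induction_on_max with
  | empty => intro j hj; exact absurd hj (Finset.notMem_empty j)
  | insert a s hmax ih =>
    have has : a ∉ s := fun h => lt_irrefl a (hmax a h)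
    rw [Finset.sum_insert has, Finset.sum_insert has] at hsum
    have h1 : ∑ j ∈ s, B ^ j * e j < B ^ a :=
      sum_lt_pow hB e s a hmax (fun j hj => he j (Finset.mem_insert_of_mem hj))
    have h2 : ∑ j ∈ s, B ^ j * f j < B ^ a :=
      sum_lt_pow hB f s a hmax (fun j hj => hf j (Finset.mem_insert_of_mem hj))
    have h3 : B ^ a * e a + ∑ j ∈ s, B ^ j * e j
        = B ^ a * f a + ∑ j ∈ s, B ^ j * f j := hsum
    obtain ⟨hea, hsum'⟩ := digit_cancel h1 h2 h3
    intro j hj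
    rcases Finset.mem_insert.1 hj with rfl | hj'
    · exact hea
    · exact ih (fun i hi => he i (Finset.mem_insert_of_mem hi))
        (fun i hi => hf i (Finset.mem_insert_of_mem hi)) hsum' j hj'

lemma finsupp_eq_of_digits {B k : ℕ} (hB : 2 ≤ B) {α β : ℕ →₀ ℕ}
    (hα : ∀ j, α j < B) (hβ : ∀ j, β j < B)
    (hH : ∑ j ∈ α.support.erase k, B ^ j * α j = ∑ j ∈ β.support.erase k, B ^ j * β j)
    (hdeg : deg α = deg β) : α = β := by
  set W := α.support.erase k ∪ β.support.erase k with hW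
  have hWk : ∀ j ∈ W, j ≠ k := by
    intro j hj
    rcases Finset.mem_union.1 hj with h | h
    · exact Finset.ne_of_mem_erase h
    · exact Finset.ne_of_mem_erase h
  have hzero : ∀ (γ : ℕ →₀ ℕ) (g : ℕ → ℕ), (∀ j ∈ W, j ∉ γ.support.erase k → γ j = 0) := by
    intro γ _ j hjW hj
    by_contra hγ
    exact hj (Finset.mem_erase.2 ⟨hWk j hjW, Finsupp.mem_support_iff.2 hγ⟩)
  have hsubα : α.support.erase k ⊆ W := Finset.subset_union_left
  have hsubβ : β.support.erase k ⊆ W := Finset.subset_union_right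
  have hWα : ∑ j ∈ α.support.erase k, B ^ j * α j = ∑ j ∈ W, B ^ j * α j := by
    refine Finset.sum_subset hsubα fun j hjW hj => ?_
    rw [hzero α (fun _ => 0) j hjW hj, Nat.mul_zero]
  have hWβ : ∑ j ∈ β.support.erase k, B ^ j * β j = ∑ j ∈ W, B ^ j * β j := by
    refine Finset.sum_subset hsubβ fun j hjW hj => ?_
    rw [hzero β (fun _ => 0) j hjW hj, Nat.mul_zero]
  have hdig := digits_inj hB (fun j => α j) (fun j => β j) W
    (fun j _ => hα j) (fun j _ => hβ j) (by rw [← hWα, ← hWβ, hH])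
  have hoff : ∀ j, j ≠ k → α j = β j := by
    intro j hjk
    by_cases hjW : j ∈ W
    · exact hdig j hjW
    · have h1 : α j = 0 := by
        by_contra hγ
        exact hjW (hsubα (Finset.mem_erase.2 ⟨hjk, Finsupp.mem_support_iff.2 hγ⟩))
      have h2 : β j = 0 := by
        by_contra hγ
        exact hjW (hsubβ (Finset.mem_erase.2 ⟨hjk, Finsupp.mem_support_iff.2 hγ⟩))
      rw [h1, h2]
  have hsum_eq : ∑ j ∈ α.support.erase k, α j = ∑ j ∈ β.support.erase k, β j := by
    have hα' : ∑ j ∈ α.support.erase k, α j = ∑ j ∈ W, α j := by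
      refine Finset.sum_subset hsubα fun j hjW hj => hzero α (fun _ => 0) j hjW hj
    have hβ' : ∑ j ∈ β.support.erase k, β j = ∑ j ∈ W, β j := by
      refine Finset.sum_subset hsubβ fun j hjW hj => hzero β (fun _ => 0) j hjW hj
    rw [hα', hβ']
    exact Finset.sum_congr rfl fun j hj => hdig j hj
  have hk : α k = β k := by
    have h1 := deg_erase_add k α
    have h2 := deg_erase_add k β
    omega
  ext j
  rcases eq_or_ne j k with rfl | hjk
  · exact hk
  · exact hoff j hjk


/-! ### ℓ¹ coefficient families and evaluation along curves -/

lemma lp1_summable (a : CoeffInf) : Summable fun α => ‖a α‖ := by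
  have h := Memℓp.summable (by norm_num : (0:ℝ) < (1 : ℝ≥0∞).toReal) (lp.memℓp a)
  simpa using h

lemma lp1_tsum_norm (a : CoeffInf) : ∑' α, ‖a α‖ = ‖a‖ := by
  rw [lp.norm_eq_tsum_rpow (by norm_num) a]
  simp

lemma eval_lpsingle (β : ℕ →₀ ℕ) (z : ℕ → ℂ) :
    ∑' α, (lp.single 1 β (1:ℂ) : CoeffInf) α * monomial z α = monomial z β := by
  rw [tsum_eq_single β]
  · rw [lp.single_apply_self, one_mul]
  · intro α hα
    rw [lp.single_apply_ne 1 β _ hα, zero_mul]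

lemma curve_mem_ballB {q : ℕ → ℂ} (hq : ∀ j, ‖q j‖ ≤ 1) {N : ℕ}
    (hfin : ∀ j, N ≤ j → q j = 0) {w : ℂ} (hw : ‖w‖ < 1) :
    (fun j => q j * w) ∈ ballB := by
  refine And.intro ?_ ?_
  · intro j
    rw [norm_mul]
    calc ‖q j‖ * ‖w‖ ≤ 1 * ‖w‖ := by gcongr; exact hq j
      _ = ‖w‖ := one_mul _
      _ < 1 := hw
  · refine Tendsto.congr' ?_ (tendsto_const_nhds (x := (0:ℂ)))
    filter_upwards [eventually_ge_atTop N] with j hj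
    rw [hfin j hj, zero_mul]

lemma eval_curve {u : (ℕ →₀ ℕ) → ℂ} (hu : Summable fun α => ‖u α‖) {q : ℕ → ℂ}
    (hq : ∀ j, ‖q j‖ ≤ 1) {w : ℂ} (hw : ‖w‖ ≤ 1) :
    ∑' α, u α * monomial (fun j => q j * w) α
      = psum (fun n => ∑' α : deg ⁻¹' {n}, u α * Qf q α) w := by
  have huQ : Summable fun α => ‖u α * Qf q α‖ :=
    hu.of_nonneg_of_le (fun α => norm_nonneg _) fun α => by
      rw [norm_mul]
      calc ‖u α‖ * ‖Qf q α‖ ≤ ‖u α‖ * 1 := by gcongr; exact norm_Qf_le hq α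
        _ = ‖u α‖ := mul_one _
  have h := (group (fun α => u α * Qf q α) huQ deg).2 w hw
  rw [← h]
  refine tsum_congr fun α => ?_
  rw [monomial_curve, mul_assoc]

lemma eval_curve_summable {u : (ℕ →₀ ℕ) → ℂ} (hu : Summable fun α => ‖u α‖) {q : ℕ → ℂ}
    (hq : ∀ j, ‖q j‖ ≤ 1) :
    Summable fun n => ‖∑' α : deg ⁻¹' {n}, u ↑α * Qf q ↑α‖ := by
  have huQ : Summable fun α => ‖u α * Qf q α‖ :=
    hu.of_nonneg_of_le (fun α => norm_nonneg _) fun α => by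
      rw [norm_mul]
      calc ‖u α‖ * ‖Qf q α‖ ≤ ‖u α‖ * 1 := by gcongr; exact norm_Qf_le hq α
        _ = ‖u α‖ := mul_one _
  exact (group (fun α => u α * Qf q α) huQ deg).1

lemma eval_curve_norm_le {u : (ℕ →₀ ℕ) → ℂ} (hu : Summable fun α => ‖u α‖) {q : ℕ → ℂ}
    (hq : ∀ j, ‖q j‖ ≤ 1) :
    ∑' n, ‖∑' α : deg ⁻¹' {n}, u ↑α * Qf q ↑α‖ ≤ ∑' α, ‖u α‖ := by
  have huQ : Summable fun α => ‖u α * Qf q α‖ :=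
    hu.of_nonneg_of_le (fun α => norm_nonneg _) fun α => by
      rw [norm_mul]
      calc ‖u α‖ * ‖Qf q α‖ ≤ ‖u α‖ * 1 := by gcongr; exact norm_Qf_le hq α
        _ = ‖u α‖ := mul_one _
  have hfib : HasSum (fun n => ∑' α : deg ⁻¹' {n}, ‖u ↑α * Qf q ↑α‖)
      (∑' α, ‖u α * Qf q α‖) := huQ.hasSum.tsum_fiberwise deg
  calc ∑' n, ‖∑' α : deg ⁻¹' {n}, u ↑α * Qf q ↑α‖
      ≤ ∑' n, ∑' α : deg ⁻¹' {n}, ‖u ↑α * Qf q ↑α‖ := by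
        refine Summable.tsum_le_tsum (fun n => norm_tsum_le_tsum_norm (huQ.subtype _))
          (eval_curve_summable hu hq) hfib.summable
    _ = ∑' α, ‖u α * Qf q α‖ := hfib.tsum_eq
    _ ≤ ∑' α, ‖u α‖ := by
        refine Summable.tsum_le_tsum (fun α => ?_) huQ hu
        rw [norm_mul]
        calc ‖u α‖ * ‖Qf q α‖ ≤ ‖u α‖ * 1 := by gcongr; exact norm_Qf_le hq α
          _ = ‖u α‖ := mul_one _


lemma fiber_eq {g : (ℕ →₀ ℕ) → ℕ} {n : ℕ} (i : ↥(g ⁻¹' {n})) : g ↑i = n := i.2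

lemma fiber_eq' {I : Type*} {g : I → ℕ} {n : ℕ} (i : ↥(g ⁻¹' {n})) : g ↑i = n := i.2

end Stmt11

open Stmt11 Metric Set

set_option maxHeartbeats 1000000

theorem statement_11 (φ : (ℕ → ℂ) → (ℕ → ℂ))
    (hmaps : ∀ z ∈ ballB, φ z ∈ ballB)
    (T : CoeffInf →L[ℂ] CoeffInf)
    (hT : ∀ (a : CoeffInf), ∀ z ∈ ballB,
      ∑' α : ℕ →₀ ℕ, (T a) α * monomial z α
        = ∑' α : ℕ →₀ ℕ, a α * monomial (φ z) α)
    (hbij : Function.Bijective T)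
    (hfact : ∀ k : ℕ, ∃ d : ℕ, 1 ≤ d ∧
      (∀ α : ℕ →₀ ℕ,
        (T (lp.single 1 (Finsupp.single k 1) (1 : ℂ))) α ≠ 0 → d ≤ α k) ∧
      (T (lp.single 1 (Finsupp.single k 1) (1 : ℂ))) (Finsupp.single k d) ≠ 0) :
    ∃ ε : ℕ → ℂ, (∀ j, ‖ε j‖ = 1) ∧
      ∀ z ∈ ballB, ∀ j, φ z j = ε j * z j := by
  classical
  have hker : LinearMap.ker (T : CoeffInf →ₗ[ℂ] CoeffInf) = ⊥ := LinearMap.ker_eq_bot.2 hbij.1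
  have hrange : LinearMap.range (T : CoeffInf →ₗ[ℂ] CoeffInf) = ⊤ := LinearMap.range_eq_top.2 hbij.2
  set Te := ContinuousLinearEquiv.ofBijective T hker hrange with hTedef
  have hTsymm : ∀ y, T (Te.symm y) = y := fun y =>
    ContinuousLinearEquiv.ofBijective_apply_symm_apply T hker hrange y
  obtain ⟨C, hC⟩ : ∃ C : ℝ, ∀ y : CoeffInf, ‖Te.symm y‖ ≤ C * ‖y‖ := by
    refine ⟨‖(Te.symm : CoeffInf →L[ℂ] CoeffInf)‖, fun y => ?_⟩
    have h := ContinuousLinearMap.le_opNorm (Te.symm : CoeffInf →L[ℂ] CoeffInf) y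
    simpa using h
  set b : ℕ → CoeffInf := fun k => T (lp.single 1 (Finsupp.single k 1) (1:ℂ)) with hbdef
  have hspec : ∀ k α, (b k) α ≠ 0 → 1 ≤ α k := by
    intro k α hα
    obtain ⟨d, hd1, hdspec, -⟩ := hfact k
    exact le_trans hd1 (hdspec α hα)
  have hball0 : ∀ k α, α k = 0 → (b k) α = 0 := by
    intro k α h
    by_contra hc
    have := hspec k α hc
    omega
  have hbsum : ∀ k, Summable fun α => ‖(b k) α‖ := fun k => Stmt11.lp1_summable _
  have hcoord : ∀ z ∈ ballB, ∀ k, φ z k = ∑' α, (b k) α * monomial z α := by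
    intro z hz k
    have h := hT (lp.single 1 (Finsupp.single k 1) (1:ℂ)) z hz
    rw [Stmt11.eval_lpsingle, Stmt11.monomial_single, pow_one] at h
    exact h.symm
  -- ### The per-coordinate key result
  have main : ∀ k, ‖(b k) (Finsupp.single k 1)‖ = 1 ∧
      ∀ α, α ≠ Finsupp.single k 1 → (b k) α = 0 := by
    intro k
    set q1 : ℕ → ℂ := fun j => if j = k then 1 else 0 with hq1def
    have hq1 : ∀ j, ‖q1 j‖ ≤ 1 := by
      intro j
      rw [hq1def]
      dsimp only
      split <;> simp
    have hq1fin : ∀ j, k + 1 ≤ j → q1 j = 0 := by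
      intro j hj
      rw [hq1def]
      dsimp only
      rw [if_neg (by omega)]
    have hcv : ∀ {w : ℂ}, ‖w‖ < 1 → (fun j => q1 j * w) ∈ ballB :=
      fun hw => Stmt11.curve_mem_ballB hq1 hq1fin hw
    -- identify the axis coefficients
    have hline_id : ∀ (u : (ℕ →₀ ℕ) → ℂ) (n : ℕ),
        (∑' α : deg ⁻¹' {n}, u ↑α * Stmt11.Qf q1 ↑α) = u (Finsupp.single k n) := by
      intro u n
      have hmem : Finsupp.single k n ∈ deg ⁻¹' {n} := by
        simp [Stmt11.deg_single]
      rw [tsum_eq_single (⟨Finsupp.single k n, hmem⟩ : ↥(deg ⁻¹' {n}))]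
      · have : Stmt11.Qf q1 (Finsupp.single k n) = 1 := by
          rw [Stmt11.Qf_single]
          simp [hq1def]
        rw [this, mul_one]
      · intro i hi
        have hideg : deg (↑i : ℕ →₀ ℕ) = n := Stmt11.fiber_eq i
        by_cases hsupp : (↑i : ℕ →₀ ℕ).support ⊆ {k}
        · exfalso
          apply hi
          have h1 : (↑i : ℕ →₀ ℕ) = Finsupp.single k ((↑i : ℕ →₀ ℕ) k) :=
            Stmt11.eq_single_of_support_subset hsupp
          have h2 : (↑i : ℕ →₀ ℕ) k = n := by
            rw [h1, Stmt11.deg_single] at hideg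
            exact hideg
          apply Subtype.ext
          rw [h1, h2]
        · obtain ⟨j, hjs, hjk⟩ := Finset.not_subset.1 hsupp
          have : q1 j = 0 := by
            rw [hq1def]
            dsimp only
            rw [if_neg (by simpa using hjk)]
          rw [Stmt11.Qf_eq_zero hjs this, mul_zero]
    set cl : ℕ → ℂ := fun n => (b k) (Finsupp.single k n) with hcldef
    have hclsum : Summable fun n => ‖cl n‖ := by
      refine (Stmt11.eval_curve_summable (hbsum k) hq1).congr fun n => ?_
      rw [hline_id]
    set f : ℂ → ℂ := Stmt11.psum cl with hfdef
    have hcl0 : cl 0 = 0 := by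
      rw [hcldef]
      exact hball0 k _ (by simp)
    have hf0 : f 0 = 0 := by
      rw [hfdef, Stmt11.psum_zero]
      exact hcl0
    have hfval : ∀ w ∈ ball (0:ℂ) 1, φ (fun j => q1 j * w) k = f w := by
      intro w hw
      rw [mem_ball_zero_iff] at hw
      rw [hcoord _ (hcv hw) k, Stmt11.eval_curve (hbsum k) hq1 hw.le, hfdef]
      congr 1
      funext n
      rw [hline_id]
    have hflt : ∀ w ∈ ball (0:ℂ) 1, ‖f w‖ < 1 := by
      intro w hw
      rw [← hfval w hw]
      exact (hmaps _ (hcv (mem_ball_zero_iff.1 hw))).1 k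
    have hφcurve : ∀ w ∈ ball (0:ℂ) 1,
        φ (fun j => q1 j * w) = fun j => q1 j * (f w) := by
      intro w hw
      have hwlt := mem_ball_zero_iff.1 hw
      funext j
      by_cases hj : j = k
      · rw [hj, hfval w hw]
        have h1 : q1 k = 1 := by rw [hq1def]; simp
        rw [h1, one_mul]
      · have hq1j : q1 j = 0 := by
          rw [hq1def]; dsimp only; rw [if_neg hj]
        have hz : (fun i => q1 i * w) j = 0 := by simp [hq1j]
        have h1 : φ (fun i => q1 i * w) j = ∑' α, (b j) α * monomial (fun i => q1 i * w) α :=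
          hcoord _ (hcv hwlt) j
        have hterm : ∀ α, (b j) α * monomial (fun i => q1 i * w) α = 0 := by
          intro α
          rcases eq_or_ne ((b j) α) 0 with h | h
          · rw [h, zero_mul]
          · rw [Stmt11.monomial_eq_zero hz ?_, mul_zero]
            have := hspec j α h
            omega
        rw [h1, tsum_congr hterm, tsum_zero, hq1j, zero_mul]
    -- the inverse-side series along the axis
    set A : ℕ → ℕ → ℂ := fun m n => (Te.symm (lp.single 1 (Finsupp.single k m) (1:ℂ))) (Finsupp.single k n) with hAdef
    have hAsum : ∀ m, Summable fun n => ‖A m n‖ := by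
      intro m
      refine (Stmt11.eval_curve_summable (Stmt11.lp1_summable (Te.symm (lp.single 1 (Finsupp.single k m) (1:ℂ)))) hq1).congr
        fun n => ?_
      rw [hline_id]
    have hAle : ∀ m, ∑' n, ‖A m n‖ ≤ C := by
      intro m
      have h1 : ∑' n, ‖A m n‖
          = ∑' n, ‖∑' α : deg ⁻¹' {n}, (Te.symm (lp.single 1 (Finsupp.single k m) (1:ℂ))) ↑α * Stmt11.Qf q1 ↑α‖ := by
        refine tsum_congr fun n => ?_
        rw [hline_id]
      rw [h1]
      have h2 := hC (lp.single 1 (Finsupp.single k m) (1:ℂ))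
      have h3 : ‖(lp.single 1 (Finsupp.single k m) (1:ℂ) : CoeffInf)‖ = 1 := by
        rw [lp.norm_single (E := fun _ : ℕ →₀ ℕ => ℂ) (p := 1) (by norm_num) (Finsupp.single k m) (1:ℂ)]
        exact norm_one
      rw [h3, mul_one] at h2
      calc ∑' n, ‖∑' α : deg ⁻¹' {n}, (Te.symm (lp.single 1 (Finsupp.single k m) (1:ℂ))) ↑α * Stmt11.Qf q1 ↑α‖
          ≤ ∑' α, ‖(Te.symm (lp.single 1 (Finsupp.single k m) (1:ℂ))) α‖ :=
            Stmt11.eval_curve_norm_le (Stmt11.lp1_summable _) hq1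
        _ = ‖Te.symm (lp.single 1 (Finsupp.single k m) (1:ℂ))‖ := Stmt11.lp1_tsum_norm _
        _ ≤ C := h2
    -- the fundamental identity : psum (A m) (f w) = w ^ m
    have hFid : ∀ m, ∀ w ∈ ball (0:ℂ) 1, Stmt11.psum (A m) (f w) = w ^ m := by
      intro m w hw
      have hwlt := mem_ball_zero_iff.1 hw
      have h := hT (Te.symm (lp.single 1 (Finsupp.single k m) (1:ℂ))) (fun j => q1 j * w) (hcv hwlt)
      rw [hTsymm] at h
      rw [Stmt11.eval_lpsingle, Stmt11.monomial_single] at h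
      rw [hφcurve w hw] at h
      rw [Stmt11.eval_curve (Stmt11.lp1_summable _) hq1 (hflt w hw).le] at h
      have hq1k : q1 k = 1 := by rw [hq1def]; simp
      rw [hq1k, one_mul] at h
      rw [h]
      congr 1
      funext n
      rw [hline_id, hAdef]
    -- analytic facts about f
    have hfana : AnalyticOnNhd ℂ f (ball 0 1) := Stmt11.psum_analytic hclsum
    have hfdiff : DifferentiableOn ℂ f (ball 0 1) :=
      fun x hx => (hfana x hx).differentiableAt.differentiableWithinAt
    -- f is not eventually zero near 0
    have hne : ∀ᶠ w in nhdsWithin 0 {(0:ℂ)}ᶜ, f w ≠ 0 := by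
      rcases (hfana 0 (mem_ball_self one_pos)).eventually_eq_zero_or_eventually_ne_zero
        with hz | hn
      · exfalso
        have hev : ∀ᶠ w in nhds (0:ℂ), w = Stmt11.psum (A 1) 0 := by
          filter_upwards [hz, ball_mem_nhds (0:ℂ) one_pos] with w h1 h2
          have h3 := hFid 1 w h2
          rw [h1, pow_one] at h3
          exact h3.symm
        obtain ⟨δ, hδ, hδ'⟩ := Metric.eventually_nhds_iff.1 hev
        have h0 : (0:ℂ) = Stmt11.psum (A 1) 0 := hδ' (by simpa using hδ)
        have h1 : ((δ/2 : ℝ) : ℂ) = Stmt11.psum (A 1) 0 := by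
          apply hδ'
          rw [dist_zero_right, Complex.norm_real, Real.norm_eq_abs, abs_of_pos (by linarith)]
          linarith
        rw [← h0] at h1
        have : (δ/2 : ℝ) = 0 := by exact_mod_cast h1
        linarith
      · exact hn
    -- identity theorem : psum (A m) = (psum (A 1))^m on the ball
    have hfreq : ∀ m : ℕ, ∃ᶠ ζ in nhdsWithin 0 {(0:ℂ)}ᶜ,
        Stmt11.psum (A m) ζ = (Stmt11.psum (A 1) ζ) ^ m := by
      intro m
      rw [Filter.frequently_iff]
      intro U hU
      obtain ⟨r, hr, hrU⟩ := Metric.mem_nhdsWithin_iff.1 hU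
      have hcont : ContinuousAt f 0 := (hfana 0 (mem_ball_self one_pos)).continuousAt
      have htends : Filter.Tendsto f (nhds 0) (nhds 0) := by
        have h := hcont.tendsto
        rwa [hf0] at h
      have hsmall : ∀ᶠ w in nhds (0:ℂ), f w ∈ ball (0:ℂ) r :=
        htends (ball_mem_nhds (0:ℂ) hr)
      have hball1 : ∀ᶠ w in nhdsWithin (0:ℂ) {(0:ℂ)}ᶜ, w ∈ ball (0:ℂ) 1 :=
        Filter.Eventually.filter_mono nhdsWithin_le_nhds (ball_mem_nhds (0:ℂ) one_pos)
      have hsmall' : ∀ᶠ w in nhdsWithin (0:ℂ) {(0:ℂ)}ᶜ, f w ∈ ball (0:ℂ) r :=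
        Filter.Eventually.filter_mono nhdsWithin_le_nhds hsmall
      obtain ⟨⟨hw1, hw2⟩, hw3⟩ := ((hne.and hsmall').and hball1).exists.choose_spec
      set w := ((hne.and hsmall').and hball1).exists.choose
      refine ⟨f w, hrU ⟨hw2, Set.mem_compl_singleton_iff.2 hw1⟩, ?_⟩
      rw [hFid m w hw3]
      have h1 := hFid 1 w hw3
      rw [pow_one] at h1
      rw [h1]
    have hEqOn : ∀ m, EqOn (Stmt11.psum (A m))
        (fun ζ => (Stmt11.psum (A 1) ζ) ^ m) (ball (0:ℂ) 1) := fun m =>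
      (Stmt11.psum_analytic (hAsum m)).eqOn_of_preconnected_of_frequently_eq
        ((Stmt11.psum_analytic (hAsum 1)).pow m)
        (convex_ball (0:ℂ) 1).isPreconnected (mem_ball_self one_pos) (hfreq m)
    -- |psum (A 1)| ≤ 1 on the ball
    have hF1le : ∀ ζ ∈ ball (0:ℂ) 1, ‖Stmt11.psum (A 1) ζ‖ ≤ 1 := by
      intro ζ hζ
      by_contra hgt
      push_neg at hgt
      obtain ⟨m, hm⟩ := pow_unbounded_of_one_lt C hgt
      have h1 : ‖Stmt11.psum (A m) ζ‖ = ‖Stmt11.psum (A 1) ζ‖ ^ m := by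
        rw [hEqOn m hζ]
        exact norm_pow _ m
      have h2 : ‖Stmt11.psum (A m) ζ‖ ≤ C :=
        le_trans (Stmt11.norm_psum_le (hAsum m) (mem_ball_zero_iff.1 hζ).le) (hAle m)
      rw [h1] at h2
      exact absurd h2 (not_le.2 hm)
    have hF10 : Stmt11.psum (A 1) 0 = 0 := by
      have h1 := hFid 1 0 (mem_ball_self one_pos)
      rw [hf0, pow_one] at h1
      exact h1
    -- Schwarz both ways gives ‖f w‖ = ‖w‖
    have hflow : ∀ w ∈ ball (0:ℂ) 1, ‖w‖ ≤ ‖f w‖ := by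
      intro w hw
      have h1 : ‖Stmt11.psum (A 1) (f w)‖ ≤ ‖f w‖ :=
        Stmt11.schwarz (fun x hx =>
          ((Stmt11.psum_analytic (hAsum 1)) x hx).differentiableAt.differentiableWithinAt)
          hF10 hF1le (mem_ball_zero_iff.2 (hflt w hw))
      have h2 := hFid 1 w hw
      rw [pow_one] at h2
      rw [h2] at h1
      exact h1
    have hfup : ∀ w ∈ ball (0:ℂ) 1, ‖f w‖ ≤ ‖w‖ := fun w hw =>
      Stmt11.schwarz hfdiff hf0 (fun x hx => (hflt x hx).le) hw
    -- rigidity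
    have hw₀ : ((1/2 : ℝ) : ℂ) ∈ ball (0:ℂ) 1 := by
      rw [mem_ball_zero_iff, Complex.norm_real, Real.norm_eq_abs,
        abs_of_pos (by norm_num : (0:ℝ) < 1/2)]
      norm_num
    have hw₀ne : ((1/2 : ℝ) : ℂ) ≠ 0 := by
      simp only [ne_eq, Complex.ofReal_eq_zero]
      norm_num
    have hw₀norm : ‖((1/2 : ℝ) : ℂ)‖ ≠ 0 := by
      rw [Complex.norm_real, Real.norm_eq_abs]
      norm_num
    have hdsl : 1 ≤ ‖dslope f 0 ((1/2 : ℝ) : ℂ)‖ := by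
      rw [dslope_of_ne _ hw₀ne, slope_def_field, hf0, sub_zero, sub_zero, norm_div,
        le_antisymm (hfup _ hw₀) (hflow _ hw₀), div_self hw₀norm]
    obtain ⟨hc1, hcother⟩ :=
      Stmt11.rigid_core hclsum hflt (by rw [Stmt11.psum_zero]; exact hcl0) hw₀ hdsl
    refine ⟨hc1, ?_⟩
    intro α₀ hα₀
    by_cases hα₀k : α₀ k = 0
    · exact hball0 k α₀ hα₀k
    have hn₀1 : 1 ≤ deg α₀ := le_trans (by omega) (Stmt11.le_deg α₀ k)
    have hn₀2 : 2 ≤ deg α₀ := by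
      rcases Nat.lt_or_ge (deg α₀) 2 with h | h
      · exfalso
        have h2 : deg α₀ = 1 := by omega
        obtain ⟨j, hj⟩ := Stmt11.deg_eq_one h2
        have hjk : j = k := by
          by_contra hjk
          rw [hj, Finsupp.single_eq_of_ne' hjk] at hα₀k
          exact hα₀k rfl
        rw [hjk] at hj
        exact hα₀ hj
      · exact h
    set n₀ := deg α₀ with hn₀def
    set B := n₀ + 1 with hBdef
    set S := α₀.support with hSdef
    have hdeg₀ : deg α₀ = n₀ := hn₀def.symm
    have hBeq : B = n₀ + 1 := hBdef
    set q2 : ℂ → ℕ → ℂ := fun v j => if j = k then 1 else if j ∈ S then v ^ (B ^ j) else 0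
      with hq2def
    have hq2le : ∀ v : ℂ, ‖v‖ ≤ 1 → ∀ j, ‖q2 v j‖ ≤ 1 := by
      intro v hv j
      rw [hq2def]
      dsimp only
      split
      · simp
      · split
        · rw [norm_pow]
          exact pow_le_one₀ (norm_nonneg _) hv
        · simp
    have hq2fin : ∀ v : ℂ, ∀ j, S.sup id + k + 1 ≤ j → q2 v j = 0 := by
      intro v j hj
      rw [hq2def]
      dsimp only
      rw [if_neg (by omega), if_neg]
      intro hjS
      have h5 := Finset.le_sup (f := id) hjS
      simp only [id] at h5
      omega
    set D : ℂ → ℕ → ℂ := fun v n => ∑' α : deg ⁻¹' {n}, (b k) ↑α * Stmt11.Qf (q2 v) ↑α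
      with hDdef
    have hDsum : ∀ v : ℂ, ‖v‖ ≤ 1 → Summable fun n => ‖D v n‖ := fun v hv =>
      Stmt11.eval_curve_summable (hbsum k) (hq2le v hv)
    have hDlt : ∀ v ∈ ball (0:ℂ) 1, ∀ w ∈ ball (0:ℂ) 1, ‖Stmt11.psum (D v) w‖ < 1 := by
      intro v hv w hw
      have hv' := (mem_ball_zero_iff.1 hv).le
      have hw' := mem_ball_zero_iff.1 hw
      have hmem := Stmt11.curve_mem_ballB (hq2le v hv') (hq2fin v) hw'
      have h1 : Stmt11.psum (D v) w = φ (fun j => q2 v j * w) k := by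
        rw [hcoord _ hmem k, Stmt11.eval_curve (hbsum k) (hq2le v hv') hw'.le]
      rw [h1]
      exact (hmaps _ hmem).1 k
    have hD0 : ∀ v : ℂ, D v 0 = 0 := by
      intro v
      have h1 : ∀ i : ↥(deg ⁻¹' ({0} : Set ℕ)), (b k) ↑i * Stmt11.Qf (q2 v) ↑i = 0 := by
        intro i
        have h2 : (↑i : ℕ →₀ ℕ) = 0 := Stmt11.deg_eq_zero (Stmt11.fiber_eq i)
        rw [h2, hball0 k 0 rfl, zero_mul]
      rw [hDdef]
      dsimp only
      rw [tsum_congr h1, tsum_zero]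
    have hD1 : ∀ v : ℂ, D v 1 = cl 1 := by
      intro v
      have hmem : Finsupp.single k 1 ∈ deg ⁻¹' ({1} : Set ℕ) := by
        simp [Stmt11.deg_single]
      rw [hDdef]
      dsimp only
      rw [tsum_eq_single (⟨Finsupp.single k 1, hmem⟩ : ↥(deg ⁻¹' {1}))]
      · have h2 : Stmt11.Qf (q2 v) (Finsupp.single k 1) = 1 := by
          rw [Stmt11.Qf_single, hq2def]
          simp
        rw [h2, mul_one]
      · intro i hi
        obtain ⟨j, hj⟩ := Stmt11.deg_eq_one (Stmt11.fiber_eq i)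
        rcases eq_or_ne j k with rfl | hjk
        · exact absurd (Subtype.ext hj) hi
        · have h3 : (↑i : ℕ →₀ ℕ) k = 0 := by
            rw [hj, Finsupp.single_eq_of_ne' hjk]
          rw [hball0 k _ h3, zero_mul]
    have hDzero : ∀ v ∈ ball (0:ℂ) 1, ∀ n, n ≠ 1 → D v n = 0 := by
      intro v hv n hn
      have hv' := (mem_ball_zero_iff.1 hv).le
      have hdsl0 : 1 ≤ ‖dslope (Stmt11.psum (D v)) 0 0‖ := by
        rw [dslope_same]
        have hderiv : deriv (Stmt11.psum (D v)) 0 = D v 1 := by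
          rw [(Stmt11.hasFPB (hDsum v hv')).hasFPowerSeriesAt.deriv]
          exact Stmt11.ofScalars_coeff (D v) 1
        rw [hderiv, hD1 v, hc1]
      have h0' : Stmt11.psum (D v) 0 = 0 := by
        rw [Stmt11.psum_zero]
        exact hD0 v
      exact (Stmt11.rigid_core (hDsum v hv') (hDlt v hv) h0'
        (mem_ball_self one_pos) hdsl0).2 n hn
    -- regroup `D v n₀` as a power series in `v`
    set u2 : ↥(deg ⁻¹' ({n₀} : Set ℕ)) → ℂ := fun i =>
      if (↑i : ℕ →₀ ℕ).support ⊆ insert k S then (b k) ↑i else 0 with hu2def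
    set Hf : ↥(deg ⁻¹' ({n₀} : Set ℕ)) → ℕ := fun i =>
      ∑ j ∈ (↑i : ℕ →₀ ℕ).support.erase k, B ^ j * (↑i : ℕ →₀ ℕ) j with hHfdef
    have hu2sum : Summable fun i => ‖u2 i‖ := by
      refine ((hbsum k).subtype _).of_nonneg_of_le (fun i => norm_nonneg _) fun i => ?_
      rw [hu2def]
      dsimp only
      split
      · exact le_rfl
      · simp
    have hterm2 : ∀ v : ℂ, ∀ i : ↥(deg ⁻¹' ({n₀} : Set ℕ)),
        (b k) ↑i * Stmt11.Qf (q2 v) ↑i = u2 i * v ^ Hf i := by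
      intro v i
      by_cases hgood : (↑i : ℕ →₀ ℕ).support ⊆ insert k S
      · have hQ : Stmt11.Qf (q2 v) ↑i = v ^ Hf i := by
          rw [hHfdef]
          refine Stmt11.Qf_pow ?_ ?_
          · rw [hq2def]; simp
          · intro j hj
            have hjk := Finset.ne_of_mem_erase hj
            have hjS : j ∈ S := by
              have h4 := hgood (Finset.mem_of_mem_erase hj)
              rcases Finset.mem_insert.1 h4 with rfl | h5
              · exact absurd rfl hjk
              · exact h5
            rw [hq2def]
            dsimp only
            rw [if_neg hjk, if_pos hjS]
        rw [hQ, hu2def]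
        dsimp only
        rw [if_pos hgood]
      · obtain ⟨j, hjs, hjn⟩ := Finset.not_subset.1 hgood
        have hjk : j ≠ k := fun h => hjn (h ▸ Finset.mem_insert_self k S)
        have hjS : j ∉ S := fun h => hjn (Finset.mem_insert_of_mem h)
        have hq0 : q2 v j = 0 := by
          rw [hq2def]
          dsimp only
          rw [if_neg hjk, if_neg hjS]
        rw [Stmt11.Qf_eq_zero hjs hq0, mul_zero, hu2def]
        dsimp only
        rw [if_neg hgood, zero_mul]
    have hgrp := Stmt11.group u2 hu2sum Hf
    have hEzero : (fun m => ∑' i : Hf ⁻¹' {m}, u2 ↑i) = fun _ => 0 := by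
      refine Stmt11.psum_unique hgrp.1 (by simpa using summable_zero) fun v hv => ?_
      have hv' := (mem_ball_zero_iff.1 hv).le
      have h1 : D v n₀ = ∑' i, u2 i * v ^ Hf i := by
        rw [hDdef]
        exact tsum_congr (hterm2 v)
      have h2 : Stmt11.psum (fun m => ∑' i : Hf ⁻¹' {m}, u2 ↑i) v = D v n₀ := by
        rw [← hgrp.2 v hv', h1]
      rw [h2, hDzero v hv n₀ (by omega)]
      have h3 : Stmt11.psum (fun _ : ℕ => (0:ℂ)) v = 0 := by
        rw [Stmt11.psum]
        simp
      rw [h3]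
    have hmem₀ : α₀ ∈ deg ⁻¹' ({n₀} : Set ℕ) := by
      rw [Set.mem_preimage, Set.mem_singleton_iff, hn₀def]
    set i₀ : ↥(deg ⁻¹' ({n₀} : Set ℕ)) := ⟨α₀, hmem₀⟩ with hi₀def
    have hm₀ : i₀ ∈ Hf ⁻¹' ({Hf i₀} : Set ℕ) := rfl
    have hval : (∑' i : Hf ⁻¹' ({Hf i₀} : Set ℕ), u2 ↑i) = (b k) α₀ := by
      rw [tsum_eq_single (⟨i₀, hm₀⟩ : ↥(Hf ⁻¹' {Hf i₀}))]
      · show (if α₀.support ⊆ insert k S then (b k) α₀ else (0:ℂ)) = (b k) α₀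
        exact if_pos (Finset.subset_insert k S)
      · intro i hi
        by_cases hgood : ((↑(↑i : ↥(deg ⁻¹' ({n₀} : Set ℕ))) : ℕ →₀ ℕ)).support ⊆ insert k S
        · exfalso
          apply hi
          have hdeg2 : deg ((↑(↑i : ↥(deg ⁻¹' ({n₀} : Set ℕ))) : ℕ →₀ ℕ)) = n₀ :=
            Stmt11.fiber_eq _
          have hH2 : Hf ↑i = Hf i₀ := Stmt11.fiber_eq' i
          have hlt1 : ∀ j, (↑(↑i : ↥(deg ⁻¹' ({n₀} : Set ℕ))) : ℕ →₀ ℕ) j < B := by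
            intro j
            have h6 := Stmt11.le_deg ((↑(↑i : ↥(deg ⁻¹' ({n₀} : Set ℕ))) : ℕ →₀ ℕ)) j
            omega
          have hlt2 : ∀ j, α₀ j < B := by
            intro j
            have h6 := Stmt11.le_deg α₀ j
            omega
          have heq : (↑(↑i : ↥(deg ⁻¹' ({n₀} : Set ℕ))) : ℕ →₀ ℕ) = α₀ := by
            refine Stmt11.finsupp_eq_of_digits (k := k) (by omega) hlt1 hlt2 hH2 ?_
            rw [hdeg2, hdeg₀]
          exact Subtype.ext (Subtype.ext heq)
        · rw [hu2def]
          dsimp only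
          rw [if_neg hgood]
    have hE := congrFun hEzero (Hf i₀)
    rw [hval] at hE
    exact hE
  -- ### Conclusion
  refine ⟨fun k => (b k) (Finsupp.single k 1), fun j => ?_, ?_⟩
  · exact (main j).1
  · intro z hz j
    rw [hcoord z hz j, tsum_eq_single (Finsupp.single j 1)]
    · rw [Stmt11.monomial_single, pow_one]
    · intro α hα
      rw [(main j).2 α hα, zero_mul]
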